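/- For any n×n matrix X over a field K, any 1 ≤ k ≤ n, and any upper unitriangular matrix u ∈ UT(n), the lower-left corner minor D_k of order n−k+1 (formed from rows [k,n] and columns [1,n−k+1]) satisfies D_k(u⁻¹ X u) = D_k(X). -/

import Mathlib

open Matrix BigOperators

/-- Clamp a natural number into `Fin n` (identity on values `< n`). -/
def fidx (n : ℕ) (hn : 0 < n) (x : ℕ) : Fin n := ⟨x % n, Nat.mod_lt _ hn⟩

/-- `Dmin n hn k X` is the corner minor `D_k(X)`: determinant of the submatrix of `X`
with rows `k, …, n` and columns `1, …, n-k+1` (1-based indexing). -/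
def Dmin {R : Type*} [CommRing R] (n : ℕ) (hn : 0 < n) (k : ℕ)
    (X : Matrix (Fin n) (Fin n) R) : R :=
  (Matrix.of fun a b : Fin (n - k + 1) =>
    X (fidx n hn (k - 1 + a.val)) (fidx n hn b.val)).det

/-- `Mmin n hn i j X` is the minor `M_{ij}(X)` of order `i' = n-i+1`: rows `i, …, n`
and columns `1, …, i'-1` together with column `j` (1-based indexing). -/
def Mmin {R : Type*} [CommRing R] (n : ℕ) (hn : 0 < n) (i j : ℕ)
    (X : Matrix (Fin n) (Fin n) R) : R :=
  (Matrix.of fun a b : Fin (n - i + 1) =>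
    X (fidx n hn (i - 1 + a.val)) (fidx n hn (if b.val < n - i then b.val else j - 1))).det

/-- `Nmin n hn j k Y` is the minor `N_{jk}(Y)` of order `k' = n-k+1`: rows `j, k+1, …, n`
and columns `1, …, k'` (1-based indexing). -/
def Nmin {R : Type*} [CommRing R] (n : ℕ) (hn : 0 < n) (j k : ℕ)
    (Y : Matrix (Fin n) (Fin n) R) : R :=
  (Matrix.of fun a b : Fin (n - k + 1) =>
    Y (fidx n hn (if a.val = 0 then j - 1 else k + a.val - 1)) (fidx n hn b.val)).det

/-- `Pmin n hn i k X Y = P_{ik}(X,Y) = Σ_{i' ≤ j ≤ k} M_{ij}(X) N_{jk}(Y)`. -/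
def Pmin {R : Type*} [CommRing R] (n : ℕ) (hn : 0 < n) (i k : ℕ)
    (X Y : Matrix (Fin n) (Fin n) R) : R :=
  ∑ j ∈ Finset.Icc (n - i + 1) k, Mmin n hn i j X * Nmin n hn j k Y

/-- Upper unitriangular matrices: ones on the diagonal, zeros below it. -/
def IsUnitriangular {R : Type*} [CommRing R] {n : ℕ}
    (u : Matrix (Fin n) (Fin n) R) : Prop :=
  (∀ i, u i i = 1) ∧ ∀ i j : Fin n, j < i → u i j = 0

section aux
variable {R : Type*} [CommRing R]

lemma sum_eq_sum_emb {n m : ℕ} (e : Fin m ↪ Fin n) (f : Fin n → R)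
    (h : ∀ p : Fin n, p ∉ Finset.univ.map e → f p = 0) :
    ∑ p : Fin n, f p = ∑ a : Fin m, f (e a) := by
  rw [← Finset.sum_map Finset.univ e f]
  exact (Finset.sum_subset (Finset.subset_univ _) (fun x _ hx => h x hx)).symm

end aux

/-- the corner minors `D_k` are invariant under conjugation by
upper unitriangular matrices. -/
theorem Dmin_unitriangular_invariant {K : Type*} [Field K] (n : ℕ) (hn : 0 < n)
    (k : ℕ) (hk : 1 ≤ k) (hkn : k ≤ n)
    (X u : Matrix (Fin n) (Fin n) K) (hu : IsUnitriangular u) :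
    Dmin n hn k (u⁻¹ * X * u) = Dmin n hn k X := by
  obtain ⟨hd, hl⟩ := hu
  -- u is upper triangular in mathlib's sense
  have hbt : u.BlockTriangular id := fun i j hij => hl i j hij
  have hdet : u.det = 1 := by
    rw [Matrix.det_of_upperTriangular hbt]
    simp [hd]
  have : Invertible u := u.invertibleOfIsUnitDet (by simp [hdet])
  have hbti : u⁻¹.BlockTriangular id := Matrix.blockTriangular_inv_of_blockTriangular hbt
  have hinvmul : u⁻¹ * u = 1 := Matrix.nonsing_inv_mul u (by simp [hdet])
  set m := n - k + 1 with hm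
  have hr : ∀ a : Fin m, k - 1 + a.val < n := fun a => by have := a.isLt; omega
  have hc : ∀ b : Fin m, b.val < n := fun b => by have := b.isLt; omega
  set r : Fin m ↪ Fin n := ⟨fun a => ⟨k - 1 + a.val, hr a⟩, fun a b hab => by
    simpa [Fin.ext_iff] using hab⟩ with hrdef
  set c : Fin m ↪ Fin n := ⟨fun b => ⟨b.val, hc b⟩, fun a b hab => by
    simpa [Fin.ext_iff] using hab⟩ with hcdef
  -- membership characterizations
  have hrmem : ∀ p : Fin n, p ∉ Finset.univ.map r → p.val < k - 1 := by
    intro p hp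
    by_contra h
    push_neg at h
    exact hp (Finset.mem_map.2 ⟨⟨p.val - (k - 1), by have := p.isLt; omega⟩,
      Finset.mem_univ _, Fin.ext (by show k - 1 + (p.val - (k - 1)) = p.val; omega)⟩)
  have hcmem : ∀ p : Fin n, p ∉ Finset.univ.map c → m ≤ p.val := by
    intro p hp
    by_contra h
    push_neg at h
    exact hp (Finset.mem_map.2 ⟨⟨p.val, h⟩, Finset.mem_univ _, Fin.ext rfl⟩)
  -- left multiplication by an upper triangular matrix
  have hleft : ∀ (A Y : Matrix (Fin n) (Fin n) K), A.BlockTriangular id →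
      ∀ (c' : Fin m → Fin n), (A * Y).submatrix r c' = A.submatrix r r * Y.submatrix r c' := by
    intro A Y hA c'
    ext a b
    show ∑ p : Fin n, A (r a) p * Y p (c' b) = ∑ a' : Fin m, A (r a) (r a') * Y (r a') (c' b)
    exact sum_eq_sum_emb r _ (fun p hp => by
      have h1 : p.val < k - 1 := hrmem p hp
      have : A (r a) p = 0 := hA (by show p.val < k - 1 + a.val; omega)
      simp [this])
  -- right multiplication by an upper triangular matrix
  have hright : ∀ (A Y : Matrix (Fin n) (Fin n) K), A.BlockTriangular id →
      ∀ (r' : Fin m → Fin n), (Y * A).submatrix r' c = Y.submatrix r' c * A.submatrix c c := by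
    intro A Y hA r'
    ext a b
    show ∑ p : Fin n, Y (r' a) p * A p (c b) = ∑ a' : Fin m, Y (r' a) (c a') * A (c a') (c b)
    exact sum_eq_sum_emb c _ (fun p hp => by
      have h1 : m ≤ p.val := hcmem p hp
      have : A p (c b) = 0 := hA (by show b.val < p.val; have := b.isLt; omega)
      simp [this])
  -- Dmin as a submatrix determinant
  have hD : ∀ Y : Matrix (Fin n) (Fin n) K, Dmin n hn k Y = (Y.submatrix r c).det := by
    intro Y
    unfold Dmin
    congr 1
    ext a b
    simp [fidx, hrdef, hcdef, Nat.mod_eq_of_lt (hr a), Nat.mod_eq_of_lt (hc b)]; rfl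
  -- determinants of the triangular blocks
  have hdetcc : (u.submatrix c c).det = 1 := by
    rw [Matrix.det_of_upperTriangular (M := u.submatrix c c)
      (fun a b hab => hl _ _ hab)]
    simp [hcdef, hd]
  have hdetrr : (u.submatrix r r).det = 1 := by
    rw [Matrix.det_of_upperTriangular (M := u.submatrix r r)
      (fun a b hab => hl _ _ (Nat.add_lt_add_left hab (k - 1)))]
    simp [hrdef, hd]
  have hdetirr : (u⁻¹.submatrix r r).det = 1 := by
    have h1 : (u⁻¹ * u).submatrix r r = u⁻¹.submatrix r r * u.submatrix r r :=
      hleft u⁻¹ u hbti r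
    have h2 : ((1 : Matrix (Fin n) (Fin n) K)).submatrix r r = 1 :=
      Matrix.submatrix_one _ r.injective
    rw [hinvmul, h2] at h1
    have := congrArg Matrix.det h1
    rw [Matrix.det_one, Matrix.det_mul, hdetrr, mul_one] at this
    exact this.symm
  -- conclude
  rw [hD, hD, hright u (u⁻¹ * X) hbt r, hleft u⁻¹ X hbti c]
  rw [Matrix.det_mul, Matrix.det_mul, hdetirr, hdetcc, one_mul, mul_one]
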